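/- If f ∈ L²(ℝⁿ, Lebesgue) and (φ_k) is a sequence of Schwartz functions with φ_k → f in L²(ℝⁿ), then the sequence of random variables (⟨·,φ_k⟩)_k is a Cauchy sequence in L²(Ω,P); moreover, if (ψ_k) is another sequence of Schwartz functions converging to f in L²(ℝⁿ), then the L²(P)-limits of (⟨·,φ_k⟩) and (⟨·,ψ_k⟩) coincide (as elements of L²(Ω,P)). -/

import Mathlib

open MeasureTheory Complex

noncomputable section

/-- The space ℝⁿ. -/
abbrev En (n : ℕ) := EuclideanSpace ℝ (Fin n)

/-- The white noise probability space Ω = 𝒮'(ℝⁿ), the space of tempered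
distributions (the continuous dual of the Schwartz space), with the weak* topology. -/
abbrev WNSpace (n : ℕ) := WeakDual ℝ (SchwartzMap (En n) ℝ)

/-- The Borel σ-algebra on Ω. -/
instance (n : ℕ) : MeasurableSpace (WNSpace n) := borel _

/-- The Lévy exponent Ψ(w) = ∫ (e^{iwz} − 1 − iwz) ν(dz). -/
def levyExponent (ν : Measure ℝ) (w : ℝ) : ℂ :=
  ∫ z : ℝ, (Complex.exp (Complex.I * w * z) - 1 - Complex.I * w * z) ∂ν


-- bound on e^{iu} - 1 - iu
lemma bound3 (u : ℝ) : ‖Complex.exp (Complex.I * u) - 1 - Complex.I * u‖ ≤ 3 * u ^ 2 := by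
  have habs : ‖Complex.I * u‖ = |u| := by
    simp
  by_cases h : |u| ≤ 1
  · calc ‖Complex.exp (Complex.I * u) - 1 - Complex.I * u‖
        ≤ ‖Complex.I * u‖ ^ 2 := by
          exact Complex.norm_exp_sub_one_sub_id_le (by rw [habs]; exact h)
      _ = u ^ 2 := by rw [habs, _root_.sq_abs]
      _ ≤ 3 * u ^ 2 := by nlinarith [sq_nonneg u]
  · push_neg at h
    have h1 : ‖Complex.exp (Complex.I * u)‖ = 1 := by
      rw [mul_comm, Complex.norm_exp_ofReal_mul_I]
    have h2 : |u| ≤ u ^ 2 := by nlinarith [abs_nonneg u, _root_.sq_abs u]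
    calc ‖Complex.exp (Complex.I * u) - 1 - Complex.I * u‖
        ≤ ‖Complex.exp (Complex.I * u) - 1‖ + ‖Complex.I * u‖ := norm_sub_le _ _
      _ ≤ (‖Complex.exp (Complex.I * u)‖ + ‖(1:ℂ)‖) + |u| := by
          have := norm_sub_le (Complex.exp (Complex.I * u)) 1
          have hiu : ‖Complex.I * (u:ℂ)‖ = |u| := by exact habs
          linarith [this, hiu.le, hiu.ge]
      _ = 2 + |u| := by rw [h1]; norm_num
      _ ≤ 3 * u ^ 2 := by nlinarith

noncomputable def levyExponent' (ν : Measure ℝ) (w : ℝ) : ℂ :=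
  ∫ z : ℝ, (Complex.exp (Complex.I * w * z) - 1 - Complex.I * w * z) ∂ν

lemma levy_bound (ν : Measure ℝ) (hM : Integrable (fun z : ℝ => z ^ 2) ν) (w : ℝ) :
    ‖levyExponent' ν w‖ ≤ 3 * w ^ 2 * ∫ z, z ^ 2 ∂ν := by
  have h := norm_integral_le_of_norm_le (μ := ν)
    (f := fun z : ℝ => Complex.exp (Complex.I * w * z) - 1 - Complex.I * w * z)
    (g := fun z : ℝ => 3 * w ^ 2 * z ^ 2)
    (by have := hM.const_mul (3 * w ^ 2); simpa [mul_assoc] using this)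
    (Filter.Eventually.of_forall fun z => by
      have h1 : (Complex.I * w * z : ℂ) = Complex.I * ((w * z : ℝ) : ℂ) := by push_cast; ring
      have := bound3 (w * z)
      simp only [h1]
      calc ‖Complex.exp (Complex.I * ((w*z:ℝ):ℂ)) - 1 - Complex.I * ((w*z:ℝ):ℂ)‖
          ≤ 3 * (w * z) ^ 2 := this
        _ = 3 * w ^ 2 * z ^ 2 := by ring)
  calc ‖levyExponent' ν w‖ ≤ ∫ z, 3 * w ^ 2 * z ^ 2 ∂ν := h
    _ = 3 * w ^ 2 * ∫ z, z ^ 2 ∂ν := by rw [integral_const_mul]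

-- limit lemma: 2(1-cos(t_k x))/t_k² → x²
lemma cos_limit (x : ℝ) :
    Filter.Tendsto (fun k : ℕ => 2 * (1 - Real.cos (((k:ℝ)+1)⁻¹ * x)) / (((k:ℝ)+1)⁻¹) ^ 2)
      Filter.atTop (nhds (x ^ 2)) := by
  by_cases hx : x = 0
  · simpa [hx] using tendsto_const_nhds
  · have hsin : Filter.Tendsto (fun y : ℝ => Real.sin y / y) (nhdsWithin 0 {0}ᶜ) (nhds 1) := by
      have h := (Real.hasDerivAt_sin 0)
      rw [hasDerivAt_iff_tendsto_slope] at h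
      have h' : Filter.Tendsto (slope Real.sin 0) (nhdsWithin 0 {0}ᶜ) (nhds 1) := by
        simpa [Real.cos_zero] using h
      refine h'.congr fun y => ?_
      simp [slope_def_field]
    have htk : Filter.Tendsto (fun k : ℕ => ((k:ℝ)+1)⁻¹) Filter.atTop (nhds 0) :=
      tendsto_one_div_add_atTop_nhds_zero_nat.congr (by intro k; rw [one_div])
    have hy : Filter.Tendsto (fun k : ℕ => ((k:ℝ)+1)⁻¹ * x / 2) Filter.atTop
        (nhdsWithin 0 {0}ᶜ) := by
      rw [tendsto_nhdsWithin_iff]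
      constructor
      · have := (htk.mul_const x).div_const 2
        simpa using this
      · exact Filter.Eventually.of_forall fun k => by
          have hk : ((k:ℝ)+1)⁻¹ ≠ 0 := by positivity
          simp only [Set.mem_compl_iff, Set.mem_singleton_iff]
          exact div_ne_zero (mul_ne_zero hk hx) two_ne_zero
    have hmain : Filter.Tendsto
        (fun k : ℕ => x ^ 2 * (Real.sin (((k:ℝ)+1)⁻¹ * x / 2) / (((k:ℝ)+1)⁻¹ * x / 2)) ^ 2)
        Filter.atTop (nhds (x ^ 2)) := by
      have := ((hsin.comp hy).pow 2).const_mul (x ^ 2)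
      simpa using this
    refine hmain.congr fun k => ?_
    have hk : ((k:ℝ)+1)⁻¹ ≠ 0 := by positivity
    have hcos : 1 - Real.cos (((k:ℝ)+1)⁻¹ * x) = 2 * Real.sin (((k:ℝ)+1)⁻¹ * x / 2) ^ 2 := by
      have := Real.sin_sq_eq_half_sub (((k:ℝ)+1)⁻¹ * x / 2)
      have h2 : 2 * (((k:ℝ)+1)⁻¹ * x / 2) = ((k:ℝ)+1)⁻¹ * x := by ring
      rw [h2] at this
      linarith
    rw [hcos]
    field_simp

lemma ofReal_sq_eq (x : ℝ) : ENNReal.ofReal (x ^ 2) = (‖x‖₊ : ENNReal) ^ 2 := by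
  rw [show x ^ 2 = ‖x‖ ^ 2 by rw [Real.norm_eq_abs, _root_.sq_abs],
    ENNReal.ofReal_pow (norm_nonneg x), ofReal_norm, enorm_eq_nnnorm]

lemma eLpNorm_two_eq {α : Type*} [MeasurableSpace α] (μ : Measure α) (f : α → ℝ) :
    eLpNorm f 2 μ = (∫⁻ a, (‖f a‖₊ : ENNReal) ^ 2 ∂μ) ^ (1/2 : ℝ) := by
  rw [eLpNorm_eq_lintegral_rpow_enorm_toReal (by norm_num) (by norm_num)]
  have h2 : (2 : ENNReal).toReal = (2 : ℝ) := by norm_num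
  rw [h2]
  congr 1
  refine lintegral_congr fun a => ?_
  rw [enorm_eq_nnnorm, ← ENNReal.rpow_natCast]
  norm_num

lemma levyExponent_eq (ν : Measure ℝ) (w : ℝ) : levyExponent ν w = levyExponent' ν w := rfl

lemma schwartz_sq_integrable {n : ℕ} (θ : SchwartzMap (En n) ℝ) :
    Integrable (fun x => θ x ^ 2) (volume : Measure (En n)) := by
  obtain ⟨C, hCpos, hC⟩ := θ.decay 0 0
  have hbd : ∀ x, ‖θ x‖ ≤ C := by
    intro x
    have := hC x
    simpa [norm_iteratedFDeriv_zero] using this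
  refine Integrable.mono' (θ.integrable.norm.const_mul C)
    ((θ.continuous.pow 2).aestronglyMeasurable) ?_
  refine Filter.Eventually.of_forall fun x => ?_
  have h1 : ‖θ x ^ 2‖ = ‖θ x‖ * ‖θ x‖ := by
    rw [sq, norm_mul]
  rw [h1]
  exact mul_le_mul_of_nonneg_right (hbd x) (norm_nonneg _)

lemma pairing_L2_bound (n : ℕ)
    (ν : Measure ℝ) (hM : Integrable (fun z : ℝ => z ^ 2) ν)
    (P : Measure (WNSpace n)) [IsProbabilityMeasure P]
    (hBM : ∀ φ : SchwartzMap (En n) ℝ,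
      ∫ ω : WNSpace n, Complex.exp (Complex.I * (ω φ : ℝ)) ∂P
        = Complex.exp (∫ x : En n, levyExponent ν (φ x)))
    (θ : SchwartzMap (En n) ℝ) :
    eLpNorm (fun ω : WNSpace n => (ω θ : ℝ)) 2 P
      ≤ ENNReal.ofReal (12 * ∫ z, z ^ 2 ∂ν) ^ (1/2 : ℝ)
        * eLpNorm (fun x => θ x) 2 (volume : Measure (En n)) := by
  haveI : BorelSpace (WNSpace n) := ⟨rfl⟩
  set M : ℝ := ∫ z, z ^ 2 ∂ν with hMdef
  set S : ℝ := ∫ x, θ x ^ 2 with hSdef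
  have hM0 : 0 ≤ M := integral_nonneg fun z => sq_nonneg z
  have hS0 : 0 ≤ S := integral_nonneg fun x => sq_nonneg (θ x)
  have hθ2 := schwartz_sq_integrable θ
  set X : WNSpace n → ℝ := fun ω => ω θ with hXdef
  have hXc : Continuous X := WeakDual.eval_continuous θ
  have hXm : Measurable X := hXc.measurable
  set t : ℕ → ℝ := fun k => ((k : ℝ) + 1)⁻¹ with htdef
  have ht0 : ∀ k, 0 < t k := fun k => by positivity
  have htk : Filter.Tendsto t Filter.atTop (nhds 0) :=
    tendsto_one_div_add_atTop_nhds_zero_nat.congr (by intro k; rw [one_div])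
  set A : ℝ → ℂ := fun s => ∫ x, levyExponent ν (s * θ x) with hAdef
  -- characteristic function identity
  have hchar : ∀ s : ℝ, ∫ ω, Complex.exp (Complex.I * ((s * X ω : ℝ) : ℂ)) ∂P
      = Complex.exp (A s) := by
    intro s
    have h1 := hBM (s • θ)
    have h2 : ∀ ω : WNSpace n, (ω (s • θ) : ℝ) = s * X ω := by
      intro ω
      rw [_root_.map_smul]
      rfl
    have h3 : ∀ x, (s • θ) x = s * θ x := fun x => rfl
    simp only [h2, h3] at h1
    exact h1
  -- integrability of the complex exponential
  have hexpInt : ∀ s : ℝ, Integrable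
      (fun ω => Complex.exp (Complex.I * ((s * X ω : ℝ) : ℂ))) P := by
    intro s
    have hcont : Continuous (fun ω : WNSpace n =>
        Complex.exp (Complex.I * ((s * X ω : ℝ) : ℂ))) := by
      fun_prop
    refine (integrable_const (1 : ℝ)).mono' hcont.aestronglyMeasurable ?_
    refine Filter.Eventually.of_forall fun ω => ?_
    have : Complex.I * ((s * X ω : ℝ) : ℂ) = ((s * X ω : ℝ) : ℂ) * Complex.I := by ring
    rw [this, Complex.norm_exp_ofReal_mul_I]
  -- cos identity
  have hcosInt : ∀ s : ℝ, Integrable (fun ω => Real.cos (s * X ω)) P := by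
    intro s
    refine (integrable_const (1 : ℝ)).mono'
      ((Real.continuous_cos.comp (continuous_const.mul hXc)).aestronglyMeasurable) ?_
    exact Filter.Eventually.of_forall fun ω => by
      simp [Real.abs_cos_le_one]
  have hRe : ∀ s : ℝ, ∫ ω, Real.cos (s * X ω) ∂P = (Complex.exp (A s)).re := by
    intro s
    have h1 : ∫ ω, Real.cos (s * X ω) ∂P
        = ∫ ω, RCLike.re (Complex.exp (Complex.I * ((s * X ω : ℝ) : ℂ))) ∂P := by
      refine integral_congr_ae (Filter.Eventually.of_forall fun ω => ?_)
      show Real.cos (s * X ω) = RCLike.re (Complex.exp (Complex.I * ((s * X ω : ℝ) : ℂ)))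
      rw [RCLike.re_to_complex]
      have h : Complex.I * ((s * X ω : ℝ) : ℂ) = ((s * X ω : ℝ) : ℂ) * Complex.I := by ring
      rw [h, Complex.exp_ofReal_mul_I_re]
    rw [h1, integral_re (hexpInt s), RCLike.re_to_complex, hchar s]
  -- bound on A
  have hAbd : ∀ s : ℝ, ‖A s‖ ≤ 3 * s ^ 2 * M * S := by
    intro s
    have h := norm_integral_le_of_norm_le (μ := (volume : Measure (En n)))
      (f := fun x => levyExponent ν (s * θ x))
      (g := fun x => 3 * s ^ 2 * M * θ x ^ 2)
      (hθ2.const_mul _)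
      (Filter.Eventually.of_forall fun x => by
        have := levy_bound ν hM (s * θ x)
        simp only [levyExponent_eq]
        calc ‖levyExponent' ν (s * θ x)‖ ≤ 3 * (s * θ x) ^ 2 * M := this
          _ = 3 * s ^ 2 * M * θ x ^ 2 := by ring)
    calc ‖A s‖ ≤ ∫ x, 3 * s ^ 2 * M * θ x ^ 2 := h
      _ = 3 * s ^ 2 * M * S := by rw [integral_const_mul]
  -- the rescaled function g
  set g : ℝ → WNSpace n → ℝ :=
    fun s ω => 2 * (1 - Real.cos (s * X ω)) / s ^ 2 with hgdef
  have hgInt : ∀ s : ℝ, Integrable (g s) P := by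
    intro s
    have h1 : Integrable (fun ω => 1 - Real.cos (s * X ω)) P :=
      (integrable_const (1 : ℝ)).sub (hcosInt s)
    have := (h1.const_mul (2 / s ^ 2))
    refine this.congr (Filter.Eventually.of_forall fun ω => ?_)
    simp only [hgdef]
    ring
  have hgNonneg : ∀ s : ℝ, ∀ ω, 0 ≤ g s ω := by
    intro s ω
    have := Real.cos_le_one (s * X ω)
    have hs : (0:ℝ) ≤ s ^ 2 := sq_nonneg s
    apply div_nonneg _ hs
    nlinarith
  -- integral of g
  have hgint_eq : ∀ s : ℝ, ∫ ω, g s ω ∂P = 2 / s ^ 2 * (1 - (Complex.exp (A s)).re) := by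
    intro s
    have h1 : ∀ ω, g s ω = 2 / s ^ 2 * (1 - Real.cos (s * X ω)) := by
      intro ω; simp only [hgdef]; ring
    simp only [h1]
    rw [integral_const_mul, integral_sub (integrable_const 1) (hcosInt s), integral_const]
    simp [hRe s, measure_univ]
  -- eventual bound on ∫ g
  have hev : ∀ᶠ k in Filter.atTop, ∫ ω, g (t k) ω ∂P ≤ 12 * M * S := by
    have hto : Filter.Tendsto (fun k => 3 * (t k) ^ 2 * M * S) Filter.atTop (nhds 0) := by
      have := ((htk.pow 2).const_mul 3).mul_const M
      have h2 := this.mul_const S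
      simpa using h2
    filter_upwards [hto.eventually (gt_mem_nhds (by norm_num : (0:ℝ) < 1))] with k hk
    have hkt := ht0 k
    have hA1 : ‖A (t k)‖ ≤ 1 := le_trans (hAbd (t k)) hk.le
    have hstep : 1 - (Complex.exp (A (t k))).re ≤ 2 * ‖A (t k)‖ := by
      have h1 : 1 - (Complex.exp (A (t k))).re = (1 - Complex.exp (A (t k))).re := by simp
      have h2 : (1 - Complex.exp (A (t k))).re ≤ ‖1 - Complex.exp (A (t k))‖ :=
        Complex.re_le_norm _
      have h3 : ‖1 - Complex.exp (A (t k))‖ = ‖Complex.exp (A (t k)) - 1‖ := by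
        rw [show (1 - Complex.exp (A (t k))) = -(Complex.exp (A (t k)) - 1) by ring,
          norm_neg]
      have h4 : ‖Complex.exp (A (t k)) - 1‖ ≤ 2 * ‖A (t k)‖ :=
        Complex.norm_exp_sub_one_le (by exact hA1)
      rw [h1]
      calc (1 - Complex.exp (A (t k))).re ≤ _ := h2
        _ = _ := h3
        _ ≤ 2 * ‖A (t k)‖ := h4
        _ = 2 * ‖A (t k)‖ := rfl
    rw [hgint_eq]
    have hA2 : ‖A (t k)‖ ≤ 3 * (t k) ^ 2 * M * S := hAbd (t k)
    have ht2 : (0:ℝ) < (t k) ^ 2 := by positivity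
    calc 2 / (t k) ^ 2 * (1 - (Complex.exp (A (t k))).re)
        ≤ 2 / (t k) ^ 2 * (2 * (3 * (t k) ^ 2 * M * S)) := by
          apply mul_le_mul_of_nonneg_left _ (by positivity)
          exact hstep.trans (by nlinarith)
      _ = 12 * M * S := by field_simp; ring
  -- lintegral version
  have hevL : ∀ᶠ k in Filter.atTop,
      ∫⁻ ω, ENNReal.ofReal (g (t k) ω) ∂P ≤ ENNReal.ofReal (12 * M * S) := by
    filter_upwards [hev] with k hk
    rw [← ofReal_integral_eq_lintegral_ofReal (hgInt (t k))
      (Filter.Eventually.of_forall (hgNonneg (t k)))]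
    exact ENNReal.ofReal_le_ofReal hk
  -- pointwise limit
  have hpt : ∀ ω, Filter.Tendsto (fun k => ENNReal.ofReal (g (t k) ω)) Filter.atTop
      (nhds ((‖X ω‖₊ : ENNReal) ^ 2)) := by
    intro ω
    have h1 := cos_limit (X ω)
    have h2 := (ENNReal.continuous_ofReal.tendsto _).comp h1
    rw [ofReal_sq_eq] at h2
    exact h2
  -- measurability of g
  have hgmeas : ∀ s : ℝ, Measurable (fun ω => ENNReal.ofReal (g s ω)) := by
    intro s
    have : Measurable (g s) := by
      have : Continuous (g s) := by
        simp only [hgdef]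
        fun_prop
      exact this.measurable
    exact this.ennreal_ofReal
  -- Fatou
  have hfatou : ∫⁻ ω, (‖X ω‖₊ : ENNReal) ^ 2 ∂P ≤ ENNReal.ofReal (12 * M * S) := by
    have h1 : ∫⁻ ω, (‖X ω‖₊ : ENNReal) ^ 2 ∂P
        = ∫⁻ ω, Filter.liminf (fun k => ENNReal.ofReal (g (t k) ω)) Filter.atTop ∂P := by
      refine lintegral_congr fun ω => ?_
      rw [(hpt ω).liminf_eq]
    rw [h1]
    calc ∫⁻ ω, Filter.liminf (fun k => ENNReal.ofReal (g (t k) ω)) Filter.atTop ∂P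
        ≤ Filter.liminf (fun k => ∫⁻ ω, ENNReal.ofReal (g (t k) ω) ∂P) Filter.atTop :=
          lintegral_liminf_le fun k => hgmeas (t k)
      _ ≤ Filter.limsup (fun k => ∫⁻ ω, ENNReal.ofReal (g (t k) ω) ∂P) Filter.atTop :=
          Filter.liminf_le_limsup
      _ ≤ ENNReal.ofReal (12 * M * S) := Filter.limsup_le_of_le (by isBoundedDefault) hevL
  -- convert to eLpNorm
  rw [eLpNorm_two_eq, eLpNorm_two_eq]
  have hSθ : ∫⁻ x, (‖θ x‖₊ : ENNReal) ^ 2 ∂(volume : Measure (En n)) = ENNReal.ofReal S := by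
    rw [hSdef, ofReal_integral_eq_lintegral_ofReal hθ2
      (Filter.Eventually.of_forall fun x => sq_nonneg _)]
    exact lintegral_congr fun x => (ofReal_sq_eq (θ x)).symm
  rw [hSθ]
  have h12 : ENNReal.ofReal (12 * M * S) = ENNReal.ofReal (12 * M) * ENNReal.ofReal S := by
    rw [← ENNReal.ofReal_mul (by positivity)]
  calc (∫⁻ ω, (‖X ω‖₊ : ENNReal) ^ 2 ∂P) ^ (1/2 : ℝ)
      ≤ (ENNReal.ofReal (12 * M) * ENNReal.ofReal S) ^ (1/2 : ℝ) := by
        rw [← h12]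
        exact ENNReal.rpow_le_rpow hfatou (by norm_num)
    _ = ENNReal.ofReal (12 * M) ^ (1/2:ℝ) * ENNReal.ofReal S ^ (1/2:ℝ) :=
        ENNReal.mul_rpow_of_nonneg _ _ (by norm_num)

theorem pairing_cauchy_and_limit_independent_of_approximation
    (n : ℕ) (hn : 1 ≤ n)
    (ν : Measure ℝ) (hν0 : ν {0} = 0)
    (hM : Integrable (fun z : ℝ => z ^ 2) ν)
    (P : Measure (WNSpace n)) [IsProbabilityMeasure P]
    (hBM : ∀ φ : SchwartzMap (En n) ℝ,
      ∫ ω : WNSpace n, Complex.exp (Complex.I * (ω φ : ℝ)) ∂P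
        = Complex.exp (∫ x : En n, levyExponent ν (φ x)))
    (f : En n → ℝ) (hf : MemLp f 2 (volume : Measure (En n)))
    (φ : ℕ → SchwartzMap (En n) ℝ)
    (hφ : Filter.Tendsto (fun k => eLpNorm (fun x => φ k x - f x) 2 (volume : Measure (En n)))
      Filter.atTop (nhds 0)) :
    -- (⟨·, φ_k⟩)_k is a Cauchy sequence in L²(Ω, P):
    (∀ ε : ENNReal, 0 < ε → ∃ N : ℕ, ∀ k l : ℕ, N ≤ k → N ≤ l →
        eLpNorm (fun ω : WNSpace n => ω (φ k) - ω (φ l)) 2 P < ε) ∧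
    -- the L²(P)-limit does not depend on the approximating sequence:
    (∀ ψ : ℕ → SchwartzMap (En n) ℝ,
      Filter.Tendsto (fun k => eLpNorm (fun x => ψ k x - f x) 2 (volume : Measure (En n)))
        Filter.atTop (nhds 0) →
      Filter.Tendsto (fun k => eLpNorm (fun ω : WNSpace n => ω (φ k) - ω (ψ k)) 2 P)
        Filter.atTop (nhds 0)) := by
  set C : ENNReal := ENNReal.ofReal (12 * ∫ z, z ^ 2 ∂ν) ^ (1/2 : ℝ) with hCdef
  have hCne : C ≠ ⊤ := by
    rw [hCdef]
    exact ENNReal.rpow_ne_top_of_nonneg (by norm_num) ENNReal.ofReal_ne_top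
  -- key difference bound
  have hdiff : ∀ θ₁ θ₂ : SchwartzMap (En n) ℝ,
      eLpNorm (fun ω : WNSpace n => ω θ₁ - ω θ₂) 2 P
        ≤ C * (eLpNorm (fun x => θ₁ x - f x) 2 (volume : Measure (En n))
            + eLpNorm (fun x => θ₂ x - f x) 2 (volume : Measure (En n))) := by
    intro θ₁ θ₂
    have h1 : (fun ω : WNSpace n => ω θ₁ - ω θ₂) = fun ω : WNSpace n => ω (θ₁ - θ₂) := by
      funext ω
      rw [map_sub]
    rw [h1]
    refine le_trans (pairing_L2_bound n ν hM P hBM (θ₁ - θ₂)) ?_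
    refine mul_le_mul_right ?_ C
    have h2 : (fun x => (θ₁ - θ₂) x) = fun x => (θ₁ x - f x) - (θ₂ x - f x) := by
      funext x
      simp [SchwartzMap.sub_apply]
    rw [h2]
    exact eLpNorm_sub_le ((θ₁.continuous.aestronglyMeasurable).sub hf.aestronglyMeasurable)
      ((θ₂.continuous.aestronglyMeasurable).sub hf.aestronglyMeasurable) one_le_two
  constructor
  · intro ε hε
    set cc : ENNReal := C + 1 with hccdef
    have hcc0 : cc ≠ 0 := by simp [hccdef]
    have hccI : cc ≠ ⊤ := by simp [hccdef, hCne]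
    set δ : ENNReal := ε / (2 * cc) with hδdef
    have hδ0 : 0 < δ := ENNReal.div_pos hε.ne' (by
      exact ENNReal.mul_ne_top (by norm_num) hccI)
    have hev := hφ.eventually (gt_mem_nhds hδ0)
    rw [Filter.eventually_atTop] at hev
    obtain ⟨N, hN⟩ := hev
    refine ⟨N, fun k l hk hl => ?_⟩
    have h1 : eLpNorm (fun ω : WNSpace n => ω (φ k) - ω (φ l)) 2 P
        ≤ C * (eLpNorm (fun x => φ k x - f x) 2 (volume : Measure (En n))
            + eLpNorm (fun x => φ l x - f x) 2 (volume : Measure (En n))) := hdiff _ _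
    have h2 : eLpNorm (fun x => φ k x - f x) 2 (volume : Measure (En n))
        + eLpNorm (fun x => φ l x - f x) 2 (volume : Measure (En n)) < δ + δ :=
      ENNReal.add_lt_add (hN k hk) (hN l hl)
    calc eLpNorm (fun ω : WNSpace n => ω (φ k) - ω (φ l)) 2 P
        ≤ C * _ := h1
      _ ≤ cc * _ := mul_le_mul_left (by simp [hccdef]) _
      _ < cc * (δ + δ) := by
          rw [ENNReal.mul_lt_mul_iff_right hcc0 hccI]
          exact h2
      _ = 2 * cc * δ := by ring
      _ ≤ ε := by
          rw [hδdef]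
          exact ENNReal.mul_div_le
  · intro ψ hψ
    have hub : Filter.Tendsto (fun k => C * (eLpNorm (fun x => φ k x - f x) 2 (volume : Measure (En n))
            + eLpNorm (fun x => ψ k x - f x) 2 (volume : Measure (En n)))) Filter.atTop (nhds 0) := by
      have := ENNReal.Tendsto.const_mul (a := C) (hφ.add hψ) (Or.inr hCne)
      simpa using this
    have hzero : Filter.Tendsto (fun _ : ℕ => (0 : ENNReal)) Filter.atTop (nhds 0) :=
      tendsto_const_nhds
    exact tendsto_of_tendsto_of_tendsto_of_le_of_le hzero
      hub (fun k => zero_le) (fun k => hdiff (φ k) (ψ k))
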